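/- Let M be a positive integer and let s, t : Fin M → ℝ be two tuples of real numbers, each nondecreasing (i ≤ j implies s(i) ≤ s(j) and t(i) ≤ t(j)). Then for every permutation σ of Fin M, ∑_{i} |s(i) − t(i)| ≤ ∑_{i} |s(i) − t(σ(i))|; that is, the identity permutation minimizes the matching cost on the line. -/

import Mathlib

open Finset

private lemma key_uncross (a b c d : ℝ) (hab : a ≤ b) (hcd : c ≤ d) :
    |a - c| + |b - d| ≤ |a - d| + |b - c| := by
  rcases abs_cases (a - c) with ⟨h1, h1'⟩ | ⟨h1, h1'⟩ <;>
  rcases abs_cases (b - d) with ⟨h2, h2'⟩ | ⟨h2, h2'⟩ <;>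
  rcases abs_cases (a - d) with ⟨h3, h3'⟩ | ⟨h3, h3'⟩ <;>
  rcases abs_cases (b - c) with ⟨h4, h4'⟩ | ⟨h4, h4'⟩ <;>
  rw [h1, h2, h3, h4] <;> linarith

private lemma swap_step (M : ℕ) (s t : Fin M → ℝ) (hs : Monotone s)
    (σ : Equiv.Perm (Fin M)) (i j : Fin M) (hij : i ≤ j)
    (hts : t (σ j) ≤ t (σ i)) :
    ∑ k, |s k - t ((σ * Equiv.swap i j) k)| ≤ ∑ k, |s k - t (σ k)| := by
  by_cases hji : i = j
  · subst hji; simp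
  set F : Fin M → ℝ := fun k => |s k - t ((σ * Equiv.swap i j) k)| with hFdef
  set G : Fin M → ℝ := fun k => |s k - t (σ k)| with hGdef
  have hjE : j ∈ (univ : Finset (Fin M)).erase i :=
    Finset.mem_erase.mpr ⟨fun h => hji h.symm, mem_univ j⟩
  rw [← Finset.add_sum_erase _ F (mem_univ i), ← Finset.add_sum_erase _ F hjE,
      ← Finset.add_sum_erase _ G (mem_univ i), ← Finset.add_sum_erase _ G hjE]
  have hsum : ∑ k ∈ ((univ : Finset (Fin M)).erase i).erase j, F k
      = ∑ k ∈ ((univ : Finset (Fin M)).erase i).erase j, G k := by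
    refine Finset.sum_congr rfl fun k hk => ?_
    have hkj : k ≠ j := (Finset.mem_erase.mp hk).1
    have hki : k ≠ i := (Finset.mem_erase.mp (Finset.mem_erase.mp hk).2).1
    simp [hFdef, hGdef, Equiv.swap_apply_of_ne_of_ne hki hkj]
  rw [hsum]
  have hFi : F i = |s i - t (σ j)| := by simp [hFdef]
  have hFj : F j = |s j - t (σ i)| := by simp [hGdef, hFdef]
  have hGi : G i = |s i - t (σ i)| := rfl
  have hGj : G j = |s j - t (σ j)| := rfl
  have := key_uncross (s i) (s j) (t (σ j)) (t (σ i)) (hs hij) hts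
  rw [hFi, hFj, hGi, hGj]
  linarith

private lemma aux_min (n : ℕ) (s t : Fin n → ℝ) (hs : Monotone s) (ht : Monotone t)
    (σ : Equiv.Perm (Fin n)) :
    ∑ i, |s i - t i| ≤ ∑ i, |s i - t (σ i)| := by
  induction n with
  | zero => simp
  | succ n ih =>
    set k : Fin (n + 1) := σ⁻¹ 0 with hk
    set τ : Equiv.Perm (Fin (n + 1)) := σ * Equiv.swap 0 k with hτ
    have hσk : σ k = 0 := by simp [hk]
    have hstep : ∑ i, |s i - t (τ i)| ≤ ∑ i, |s i - t (σ i)| := by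
      refine swap_step _ s t hs σ 0 k (Fin.zero_le k) ?_
      rw [hσk]
      exact ht (Fin.zero_le _)
    have hτ0 : τ 0 = 0 := by simp [hτ, hσk]
    -- decompose τ
    set pr := Equiv.Perm.decomposeFin τ with hpr
    have hτeq : Equiv.Perm.decomposeFin.symm pr = τ := Equiv.symm_apply_apply _ _
    have hpr1 : pr.1 = 0 := by
      have := Equiv.Perm.decomposeFin_symm_apply_zero pr.1 pr.2
      rw [hτeq] at this
      rw [← this, hτ0]
    have hτsucc : ∀ i : Fin n, τ i.succ = (pr.2 i).succ := by
      intro i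
      have := Equiv.Perm.decomposeFin_symm_apply_succ pr.2 pr.1 i
      rw [hτeq, hpr1] at this
      simpa using this
    have hmono_succ : Monotone (Fin.succ : Fin n → Fin (n + 1)) :=
      Fin.strictMono_succ.monotone
    have hIH := ih (s ∘ Fin.succ) (t ∘ Fin.succ) (hs.comp hmono_succ)
      (ht.comp hmono_succ) pr.2
    calc ∑ i, |s i - t i|
        = |s 0 - t 0| + ∑ i : Fin n, |s i.succ - t i.succ| := by
          rw [Fin.sum_univ_succ]
      _ ≤ |s 0 - t 0| + ∑ i : Fin n, |s i.succ - t (pr.2 i).succ| := by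
          exact add_le_add le_rfl hIH
      _ = ∑ i, |s i - t (τ i)| := by
          rw [Fin.sum_univ_succ, hτ0]
          congr 1
          exact Finset.sum_congr rfl fun i _ => by rw [hτsucc]
      _ ≤ ∑ i, |s i - t (σ i)| := hstep

/-- On the line, with both tuples sorted, the identity permutation minimizes the
matching cost `∑ i, |s i - t (σ i)|`. -/
theorem identity_matching_minimal_on_line (M : ℕ) (hM : 0 < M)
    (s t : Fin M → ℝ) (hs : Monotone s) (ht : Monotone t)
    (σ : Equiv.Perm (Fin M)) :
    ∑ i, |s i - t i| ≤ ∑ i, |s i - t (σ i)| :=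
  aux_min M s t hs ht σ
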